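/- Let m ≥ 2, let 𝓐 and 𝓑 partition {1,...,d-1} with 𝔟 = card(𝓑), let κ_0, ..., κ_{d-1} > 0, and define κ(ξ) = κ_0 (∑_{i∈𝓐} κ_i ξ_i²)^{m/2} + ∑_{j∈𝓑} κ_j |ξ_j|^m on the unit sphere 𝕊^{d-2}. Then for every ξ ∈ 𝕊^{d-2}, κ(ξ) ≥ 2^{-(m-2)/2} · min{2^{-(m-2)(𝔟-1)/2}, 1} · min{κ_0 min_{i∈𝓐} κ_i^{m/2}, min_{j∈𝓑} κ_j}. -/

import Mathlib

open Real Finset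

lemma aux_two {a b p : ℝ} (ha : 0 ≤ a) (hb : 0 ≤ b) (hp : 1 ≤ p) :
    (a + b) ^ p ≤ 2 ^ (p - 1) * (a ^ p + b ^ p) := by
  have h := NNReal.rpow_add_le_mul_rpow_add_rpow a.toNNReal b.toNNReal hp
  have h2 := (NNReal.coe_le_coe).2 h
  push_cast at h2
  simpa [Real.coe_toNNReal a ha, Real.coe_toNNReal b hb] using h2

lemma aux_sum {ι : Type*} (s : Finset ι) (hs : s.Nonempty) (f : ι → ℝ)
    (hf : ∀ i ∈ s, 0 ≤ f i) {p : ℝ} (hp : 1 ≤ p) :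
    (s.card : ℝ) ^ ((1 : ℝ) - p) * (∑ i ∈ s, f i) ^ p ≤ ∑ i ∈ s, f i ^ p := by
  have hcard : (0 : ℝ) < s.card := by exact_mod_cast hs.card_pos
  have h := Real.rpow_arith_mean_le_arith_mean_rpow s (fun _ => (s.card : ℝ)⁻¹) f
    (fun i _ => by positivity) (by simp [Finset.sum_const, hcard.ne']) hf hp
  rw [← Finset.mul_sum, ← Finset.mul_sum,
    Real.mul_rpow (by positivity) (Finset.sum_nonneg hf),
    Real.inv_rpow hcard.le p] at h
  have key : (s.card : ℝ) ^ ((1 : ℝ) - p) * (∑ i ∈ s, f i) ^ p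
      = (s.card : ℝ) * (((s.card : ℝ) ^ p)⁻¹ * (∑ i ∈ s, f i) ^ p) := by
    rw [Real.rpow_sub hcard, Real.rpow_one]; ring
  calc (s.card : ℝ) ^ ((1 : ℝ) - p) * (∑ i ∈ s, f i) ^ p
      = (s.card : ℝ) * (((s.card : ℝ) ^ p)⁻¹ * (∑ i ∈ s, f i) ^ p) := key
    _ ≤ (s.card : ℝ) * ((s.card : ℝ)⁻¹ * ∑ i ∈ s, f i ^ p) :=
        mul_le_mul_of_nonneg_left h hcard.le
    _ = ∑ i ∈ s, f i ^ p := by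
        rw [← mul_assoc, mul_inv_cancel₀ hcard.ne', one_mul]

theorem kappa_lower_bound (d : ℕ) (hd : 3 ≤ d) (m : ℝ) (hm : 2 ≤ m)
    (A B : Finset (Fin (d - 1))) (hAB : A ∪ B = Finset.univ) (hABdisj : A ∩ B = ∅)
    (hA : A.Nonempty) (hB : B.Nonempty)
    (κ₀ : ℝ) (hκ₀ : 0 < κ₀) (κ : Fin (d - 1) → ℝ) (hκ : ∀ i, 0 < κ i)
    (ξ : Fin (d - 1) → ℝ) (hξ : ∑ i, (ξ i) ^ 2 = 1) :
    (2 : ℝ) ^ (-(m - 2) / 2) *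
        min ((2 : ℝ) ^ (-(m - 2) * ((B.card : ℝ) - 1) / 2)) 1 *
        min (κ₀ * (A.inf' hA fun i => (κ i) ^ (m / 2))) (B.inf' hB fun j => κ j) ≤
      κ₀ * (∑ i ∈ A, κ i * (ξ i) ^ 2) ^ (m / 2) + ∑ j ∈ B, κ j * |ξ j| ^ m := by
  set p : ℝ := m / 2 with hpdef
  have hp1 : 1 ≤ p := by unfold p; linarith
  have hp0 : 0 ≤ p := by linarith
  set SA : ℝ := ∑ i ∈ A, ξ i ^ 2 with hSAdef
  set SB : ℝ := ∑ j ∈ B, ξ j ^ 2 with hSBdef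
  have hSA0 : 0 ≤ SA := Finset.sum_nonneg fun i _ => sq_nonneg _
  have hSB0 : 0 ≤ SB := Finset.sum_nonneg fun i _ => sq_nonneg _
  have hdisj : Disjoint A B := Finset.disjoint_iff_inter_eq_empty.2 hABdisj
  have hSAB : SA + SB = 1 := by
    rw [hSAdef, hSBdef, ← Finset.sum_union hdisj, hAB, hξ]
  set kA : ℝ := A.inf' hA κ with hkAdef
  set kB : ℝ := B.inf' hB κ with hkBdef
  obtain ⟨iA, hiA, hiAeq⟩ := Finset.exists_mem_eq_inf' hA κ
  obtain ⟨iB, hiB, hiBeq⟩ := Finset.exists_mem_eq_inf' hB κ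
  have hkA0 : 0 < kA := by rw [hkAdef, hiAeq]; exact hκ iA
  have hkB0 : 0 < kB := by rw [hkBdef, hiBeq]; exact hκ iB
  -- abs-power rewrite
  have habs : ∀ x : ℝ, |x| ^ m = (x ^ 2) ^ p := by
    intro x
    rw [← sq_abs, ← Real.rpow_natCast |x| 2, ← Real.rpow_mul (abs_nonneg x)]
    norm_num [hpdef]
    rw [mul_div_cancel₀ m two_ne_zero]
  -- Step A : first term
  have h1 : kA * SA ≤ ∑ i ∈ A, κ i * ξ i ^ 2 := by
    rw [hSAdef, Finset.mul_sum]
    exact Finset.sum_le_sum fun i hi =>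
      mul_le_mul_of_nonneg_right (Finset.inf'_le κ hi) (sq_nonneg _)
  have hstepA : κ₀ * (kA ^ p * SA ^ p) ≤ κ₀ * (∑ i ∈ A, κ i * ξ i ^ 2) ^ p := by
    apply mul_le_mul_of_nonneg_left _ hκ₀.le
    rw [← Real.mul_rpow hkA0.le hSA0]
    exact Real.rpow_le_rpow (by positivity) h1 hp0
  -- Step B : second term
  have hstepB : kB * ((B.card : ℝ) ^ ((1:ℝ) - p) * SB ^ p) ≤ ∑ j ∈ B, κ j * |ξ j| ^ m := by
    have h2 : ∑ j ∈ B, κ j * |ξ j| ^ m ≥ kB * ∑ j ∈ B, (ξ j ^ 2) ^ p := by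
      rw [Finset.mul_sum]
      apply Finset.sum_le_sum
      intro j hj
      rw [habs]
      exact mul_le_mul_of_nonneg_right (Finset.inf'_le κ hj) (by positivity)
    have h3 := aux_sum B hB (fun j => ξ j ^ 2) (fun j _ => sq_nonneg _) hp1
    calc kB * ((B.card : ℝ) ^ ((1:ℝ) - p) * SB ^ p)
        ≤ kB * ∑ j ∈ B, (ξ j ^ 2) ^ p := mul_le_mul_of_nonneg_left h3 hkB0.le
      _ ≤ ∑ j ∈ B, κ j * |ξ j| ^ m := h2
  -- constants
  set c : ℝ := (B.card : ℝ) ^ ((1:ℝ) - p) with hcdef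
  have hBcard1 : 1 ≤ (B.card : ℝ) := by exact_mod_cast hB.card_pos
  have hc0 : 0 < c := Real.rpow_pos_of_pos (by linarith) _
  have hc1 : c ≤ 1 := Real.rpow_le_one_of_one_le_of_nonpos hBcard1 (by linarith)
  set M : ℝ := min (κ₀ * kA ^ p) kB with hMdef
  have hM0 : 0 < M := lt_min (by positivity) hkB0
  -- sum of the two rpow's
  have hsum : (2:ℝ) ^ ((1:ℝ) - p) ≤ SA ^ p + SB ^ p := by
    have h := aux_two hSA0 hSB0 hp1
    rw [hSAB, Real.one_rpow] at h
    have h2 : (0:ℝ) < 2 ^ (p - 1) := Real.rpow_pos_of_pos two_pos _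
    rw [show (1:ℝ) - p = -(p-1) by ring, Real.rpow_neg two_pos.le,
      inv_le_iff_one_le_mul₀ h2]
    linarith [mul_comm ((2:ℝ) ^ (p-1)) (SA ^ p + SB ^ p)]
  -- main chain on the right side
  have hmain : (2:ℝ) ^ ((1:ℝ) - p) * c * M ≤
      κ₀ * (∑ i ∈ A, κ i * ξ i ^ 2) ^ p + ∑ j ∈ B, κ j * |ξ j| ^ m := by
    have hMA : M * c * SA ^ p ≤ κ₀ * (kA ^ p * SA ^ p) := by
      have : M * c ≤ κ₀ * kA ^ p := by
        calc M * c ≤ M * 1 := mul_le_mul_of_nonneg_left hc1 hM0.le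
          _ = M := mul_one M
          _ ≤ κ₀ * kA ^ p := min_le_left _ _
      calc M * c * SA ^ p ≤ κ₀ * kA ^ p * SA ^ p :=
            mul_le_mul_of_nonneg_right this (by positivity)
        _ = κ₀ * (kA ^ p * SA ^ p) := by ring
    have hMB : M * c * SB ^ p ≤ kB * (c * SB ^ p) := by
      have : M ≤ kB := min_le_right _ _
      calc M * c * SB ^ p = M * (c * SB ^ p) := by ring
        _ ≤ kB * (c * SB ^ p) := mul_le_mul_of_nonneg_right this (by positivity)
    calc (2:ℝ) ^ ((1:ℝ) - p) * c * M ≤ (SA ^ p + SB ^ p) * c * M := by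
          apply mul_le_mul_of_nonneg_right _ hM0.le
          exact mul_le_mul_of_nonneg_right hsum hc0.le
      _ = M * c * SA ^ p + M * c * SB ^ p := by ring
      _ ≤ κ₀ * (kA ^ p * SA ^ p) + kB * (c * SB ^ p) := add_le_add hMA hMB
      _ ≤ κ₀ * (∑ i ∈ A, κ i * ξ i ^ 2) ^ p + ∑ j ∈ B, κ j * |ξ j| ^ m :=
          add_le_add hstepA hstepB
  -- compare target with the main chain's left side
  refine le_trans ?_ hmain
  have e1 : -(m - 2) / 2 = (1:ℝ) - p := by unfold p; ring
  have hmin1 : min (κ₀ * (A.inf' hA fun i => (κ i) ^ (m / 2))) (B.inf' hB fun j => κ j) ≤ M := by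
    apply min_le_min _ le_rfl
    apply mul_le_mul_of_nonneg_left _ hκ₀.le
    have h := Finset.inf'_le (fun i => (κ i) ^ (m / 2)) hiA
    show (A.inf' hA fun i => (κ i) ^ (m / 2)) ≤ (A.inf' hA κ) ^ (m / 2)
    rw [hiAeq]
    exact h
  have hmin2 : min ((2 : ℝ) ^ (-(m - 2) * ((B.card : ℝ) - 1) / 2)) 1 ≤ c := by
    refine le_trans (min_le_left _ _) ?_
    have hb2 : (B.card : ℝ) ≤ (2:ℝ) ^ ((B.card : ℝ) - 1) := by
      have hn : B.card ≤ 2 ^ (B.card - 1) := by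
        calc B.card = (B.card - 1) + 1 := (Nat.succ_pred_eq_of_pos hB.card_pos).symm
          _ ≤ 2 ^ (B.card - 1) := Nat.lt_two_pow_self (n := B.card - 1)
      have hcast : ((2:ℕ) ^ (B.card - 1) : ℝ) = (2:ℝ) ^ ((B.card:ℝ) - 1) := by
        push_cast
        rw [← Real.rpow_natCast 2 (B.card - 1)]
        congr 1
        rw [Nat.cast_sub hB.card_pos, Nat.cast_one]
      calc (B.card : ℝ) ≤ ((2:ℕ) ^ (B.card - 1) : ℝ) := by exact_mod_cast hn
        _ = (2:ℝ) ^ ((B.card:ℝ) - 1) := hcast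
    have := Real.rpow_le_rpow_of_nonpos (by linarith : (0:ℝ) < (B.card:ℝ)) hb2
      (by linarith : (1:ℝ) - p ≤ 0)
    rw [← Real.rpow_mul two_pos.le] at this
    rw [hcdef]
    refine le_trans (le_of_eq ?_) this
    congr 1
    unfold p; ring
  calc (2 : ℝ) ^ (-(m - 2) / 2) *
        min ((2 : ℝ) ^ (-(m - 2) * ((B.card : ℝ) - 1) / 2)) 1 *
        min (κ₀ * (A.inf' hA fun i => (κ i) ^ (m / 2))) (B.inf' hB fun j => κ j)
      ≤ (2 : ℝ) ^ (-(m - 2) / 2) * c * M := by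
        apply mul_le_mul (mul_le_mul_of_nonneg_left hmin2 (by positivity)) hmin1
          (le_min (mul_nonneg hκ₀.le (Finset.le_inf' hA _ fun i _ => Real.rpow_nonneg (hκ i).le _)) hkB0.le) (mul_nonneg (by positivity) hc0.le)
    _ = (2:ℝ) ^ ((1:ℝ) - p) * c * M := by rw [e1]
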